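/- Let k, C_1, C_2 ∈ ℝ and let I be an open interval on which k·(t^2 + 2C_2·t) + 2C_1 ≠ 0. Then the function u(t) = 2(t + C_2)/(k·(t^2 + 2C_2·t) + 2C_1) satisfies the second-order Riccati chain equation u''(t) + k^2·u(t)^3 + 3k·u(t)·u'(t) = 0 for all t ∈ I. -/

import Mathlib

theorem second_riccati_explicit_solution
    (k C₁ C₂ : ℝ)
    (I : Set ℝ) (hIopen : IsOpen I) (hIconn : I.OrdConnected)
    (hden : ∀ t ∈ I, k * (t ^ 2 + 2 * C₂ * t) + 2 * C₁ ≠ 0)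
    (u : ℝ → ℝ)
    (hu : ∀ t, u t = 2 * (t + C₂) / (k * (t ^ 2 + 2 * C₂ * t) + 2 * C₁)) :
    ∀ t ∈ I, deriv (deriv u) t + k ^ 2 * u t ^ 3 + 3 * k * u t * deriv u t = 0 := by
  intro t ht
  have hdt : k * (t ^ 2 + 2 * C₂ * t) + 2 * C₁ ≠ 0 := hden t ht
  set D : ℝ → ℝ := fun s => k * (s ^ 2 + 2 * C₂ * s) + 2 * C₁ with hD
  have hDd : ∀ s : ℝ, HasDerivAt D (k * (2 * s + 2 * C₂)) s := by
    intro s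
    have h1 : HasDerivAt (fun s : ℝ => s ^ 2) (2 * s) s := by
      simpa using hasDerivAt_pow 2 s
    have h2 : HasDerivAt (fun s : ℝ => 2 * C₂ * s) (2 * C₂) s := by
      simpa using (hasDerivAt_id s).const_mul (2 * C₂)
    exact ((h1.add h2).const_mul k).add_const (2 * C₁)
  have hN : ∀ s : ℝ, HasDerivAt (fun s : ℝ => 2 * (s + C₂)) 2 s := by
    intro s
    simpa using ((hasDerivAt_id s).add_const C₂).const_mul 2
  have hufun : u = fun s => 2 * (s + C₂) / D s := funext hu
  have hU : ∀ s ∈ I, HasDerivAt u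
      ((2 * D s - 2 * (s + C₂) * (k * (2 * s + 2 * C₂))) / (D s) ^ 2) s := by
    intro s hs
    rw [hufun]
    exact (hN s).div (hDd s) (hden s hs)
  set V : ℝ → ℝ := fun s =>
    (2 * D s - 2 * (s + C₂) * (k * (2 * s + 2 * C₂))) / (D s) ^ 2 with hV
  have hvev : deriv u =ᶠ[nhds t] V := by
    filter_upwards [hIopen.mem_nhds ht] with s hs
    exact (hU s hs).deriv
  -- derivative of V at t
  have hlin : HasDerivAt (fun s : ℝ => k * (2 * s + 2 * C₂)) (k * 2) t := by
    simpa using (((hasDerivAt_id t).const_mul 2).add_const (2 * C₂)).const_mul k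
  have hNum : HasDerivAt (fun s => 2 * D s - 2 * (s + C₂) * (k * (2 * s + 2 * C₂)))
      (2 * (k * (2 * t + 2 * C₂)) -
        (2 * (k * (2 * t + 2 * C₂)) + 2 * (t + C₂) * (k * 2))) t := by
    exact ((hDd t).const_mul 2).sub ((hN t).mul hlin)
  have hDen : HasDerivAt (fun s => (D s) ^ 2)
      (2 * D t ^ 1 * (k * (2 * t + 2 * C₂))) t := (hDd t).pow 2
  have hDsq : (D t) ^ 2 ≠ 0 := pow_ne_zero 2 hdt
  have hVd := hNum.div hDen hDsq
  have h2 : deriv (deriv u) t = deriv V t := hvev.deriv_eq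
  rw [h2, (show HasDerivAt V _ t from hVd).deriv, hu t, (hU t ht).deriv]
  have hDt : D t = k * (t ^ 2 + 2 * C₂ * t) + 2 * C₁ := rfl
  rw [hDt]
  field_simp
  ring
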